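/- If k ≡ 4 (mod 5), say k = 5m+4, then K_{4k+1,4k+1,4k+1} has no equitable (12m+10, 3)-tree-coloring; hence va₃≡(K_{4k+1,4k+1,4k+1}) ≥ (12k+7)/5. -/

import Mathlib

open SimpleGraph

/-- `G` has an equitable `(t,k)`-tree-coloring: a map `f : V → Fin t` whose color
classes have sizes differing by at most 1, and each color class induces a forest
(each component a tree) of maximum degree at most `k`. -/
def EqTreeColorable {V : Type} [Fintype V] (G : SimpleGraph V) (t k : ℕ) : Prop :=
  ∃ f : V → Fin t,
    (∀ i j : Fin t, ({v | f v = i} : Set V).ncard ≤ ({v | f v = j} : Set V).ncard + 1) ∧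
    (∀ i : Fin t, (G.induce {v | f v = i}).IsAcyclic) ∧
    (∀ i : Fin t, ∀ v, ((G.induce {v | f v = i}).neighborSet v).ncard ≤ k)

/-- The strong equitable vertex `k`-arboricity: the least `t` such that `G` has an
equitable `(t',k)`-tree-coloring for every `t' ≥ t`. -/
noncomputable def vaStrong {V : Type} [Fintype V] (G : SimpleGraph V) (k : ℕ) : ℕ :=
  sInf {t | ∀ t', t ≤ t' → EqTreeColorable G t' k}

/-- The complete tripartite graph `K_{n,n,n}`. -/
def K3 (n : ℕ) : SimpleGraph (Σ _ : Fin 3, Fin n) :=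
  completeMultipartiteGraph (fun _ => Fin n)

lemma K3_induce_adj {n : ℕ} {S : Set (Σ _ : Fin 3, Fin n)} (a b : S) :
    ((K3 n).induce S).Adj a b ↔ (a : Σ _ : Fin 3, Fin n).1 ≠ (b : Σ _ : Fin 3, Fin n).1 := by
  simp [K3]

lemma onePart (n : ℕ) (S : Set (Σ _ : Fin 3, Fin n))
    (hcard : 5 ≤ S.ncard)
    (hac : ((K3 n).induce S).IsAcyclic)
    (hdeg : ∀ v, (((K3 n).induce S).neighborSet v).ncard ≤ 3) :
    ∀ v ∈ S, ∀ w ∈ S, v.1 = w.1 := by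
  intro v hv w hw
  by_contra hne
  -- fibers of v and w both have ≥ 2 elements
  have hfin : S.Finite := Set.toFinite S
  have key : ∀ u ∈ S, 2 ≤ {x ∈ S | x.1 = (u:Σ _ : Fin 3, Fin n).1}.ncard := by
    intro u hu
    have himg : Subtype.val '' (((K3 n).induce S).neighborSet ⟨u, hu⟩)
        = {x ∈ S | x.1 ≠ u.1} := by
      ext x
      simp only [Set.mem_image, mem_neighborSet, Set.mem_setOf_eq]
      constructor
      · rintro ⟨y, hy, rfl⟩
        exact ⟨y.2, (K3_induce_adj _ _ |>.mp hy).symm⟩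
      · rintro ⟨hxS, hx1⟩
        exact ⟨⟨x, hxS⟩, (K3_induce_adj _ _).mpr (Ne.symm hx1), rfl⟩
    have h1 : {x ∈ S | x.1 ≠ u.1}.ncard ≤ 3 := by
      rw [← himg, Set.ncard_image_of_injective _ Subtype.val_injective]
      exact hdeg _
    have hsplit : S.ncard = {x ∈ S | x.1 = u.1}.ncard + {x ∈ S | x.1 ≠ u.1}.ncard := by
      rw [← Set.ncard_union_eq]
      · congr 1
        ext x
        by_cases h : x.1 = u.1 <;> simp [h]
      · rw [Set.disjoint_iff]
        rintro x ⟨⟨_, h1⟩, ⟨_, h2⟩⟩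
        exact h2 h1
    omega
  obtain ⟨x1, ⟨hx1S, hx1⟩, x2, ⟨hx2S, hx2⟩, hx12⟩ :=
    (Set.one_lt_ncard (s := {x ∈ S | x.1 = v.1}) (Set.toFinite _)).mp (by have := key v hv; omega)
  obtain ⟨y1, ⟨hy1S, hy1⟩, y2, ⟨hy2S, hy2⟩, hy12⟩ :=
    (Set.one_lt_ncard (s := {x ∈ S | x.1 = w.1}) (Set.toFinite _)).mp (by have := key w hw; omega)
  -- build two distinct paths from x1 to x2 in the induced graph
  have hxy1 : x1.1 ≠ y1.1 := by rw [hx1, hy1]; exact hne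
  have hxy2 : x1.1 ≠ y2.1 := by rw [hx1, hy2]; exact hne
  have hx2y1 : x2.1 ≠ y1.1 := by rw [hx2, hy1]; exact hne
  have hx2y2 : x2.1 ≠ y2.1 := by rw [hx2, hy2]; exact hne
  let X1 : S := ⟨x1, hx1S⟩
  let X2 : S := ⟨x2, hx2S⟩
  let Y1 : S := ⟨y1, hy1S⟩
  let Y2 : S := ⟨y2, hy2S⟩
  have a1 : ((K3 n).induce S).Adj X1 Y1 := (K3_induce_adj _ _).mpr hxy1
  have a2 : ((K3 n).induce S).Adj Y1 X2 := (K3_induce_adj _ _).mpr (Ne.symm hx2y1)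
  have a3 : ((K3 n).induce S).Adj X1 Y2 := (K3_induce_adj _ _).mpr hxy2
  have a4 : ((K3 n).induce S).Adj Y2 X2 := (K3_induce_adj _ _).mpr (Ne.symm hx2y2)
  have hnX : X1 ≠ X2 := fun h => hx12 (congrArg Subtype.val h)
  have hnY : Y1 ≠ Y2 := fun h => hy12 (congrArg Subtype.val h)
  have hnXY1 : X1 ≠ Y1 := fun h => hxy1 (congrArg (fun z : S => (z : Σ _ : Fin 3, Fin n).1) h)
  have hnX2Y1 : X2 ≠ Y1 := fun h => hx2y1 (congrArg (fun z : S => (z : Σ _ : Fin 3, Fin n).1) h)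
  have hnXY2 : X1 ≠ Y2 := fun h => hxy2 (congrArg (fun z : S => (z : Σ _ : Fin 3, Fin n).1) h)
  have hnX2Y2 : X2 ≠ Y2 := fun h => hx2y2 (congrArg (fun z : S => (z : Σ _ : Fin 3, Fin n).1) h)
  let w1 : ((K3 n).induce S).Walk X1 X2 := Walk.cons a1 (Walk.cons a2 Walk.nil)
  let w2 : ((K3 n).induce S).Walk X1 X2 := Walk.cons a3 (Walk.cons a4 Walk.nil)
  have hp1 : w1.IsPath := by
    simp [w1, Walk.isPath_def]
    exact ⟨⟨hnXY1, hnX⟩, fun h => hnX2Y1 h.symm⟩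
  have hp2 : w2.IsPath := by
    simp [w2, Walk.isPath_def]
    exact ⟨⟨hnXY2, hnX⟩, fun h => hnX2Y2 h.symm⟩
  have := isAcyclic_iff_path_unique.mp hac ⟨w1, hp1⟩ ⟨w2, hp2⟩
  have hw12 : w1 = w2 := congrArg Subtype.val this
  have : Y1 = Y2 := by
    have hs : w1.support = w2.support := congrArg Walk.support hw12
    simpa [w1, w2] using hs
  exact hnY this


lemma part_card (n : ℕ) (q : Fin 3) :
    (Finset.univ.filter fun v : (Σ _ : Fin 3, Fin n) => v.1 = q).card = n := by
  rw [← Fintype.card_subtype]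
  refine (Fintype.card_congr (Equiv.mk (fun v : {x : (Σ _ : Fin 3, Fin n) // x.1 = q} => (v.1.2 : Fin n)) (fun x => ⟨⟨q, x⟩, rfl⟩) ?_ ?_)).trans (Fintype.card_fin n)
  · rintro ⟨⟨i, x⟩, h⟩
    simp only at h
    subst h
    rfl
  · intro x
    rfl

lemma not_colorable (m : ℕ) :
    ¬ EqTreeColorable (K3 (4 * (5 * m + 4) + 1)) (12 * m + 10) 3 := by
  rintro ⟨f, heq, hac, hdeg⟩
  classical
  set c : Fin (12 * m + 10) → ℕ := fun i => (Finset.univ.filter fun v => f v = i).card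
    with hcdef
  have hc : ∀ i, ({v | f v = i} : Set _).ncard = c i := by
    intro i
    rw [Set.ncard_eq_toFinset_card', Set.toFinset_setOf]
  have hsum : ∑ i, c i = 3 * (4 * (5 * m + 4) + 1) := by
    have := Finset.card_eq_sum_card_fiberwise
      (f := f) (s := Finset.univ) (t := Finset.univ) (fun v _ => Finset.mem_univ _)
    rw [Finset.card_univ] at this
    rw [← this]
    simp
  have hmin : ∀ i, 5 ≤ c i := by
    intro i
    by_contra h
    have hall : ∀ j, c j ≤ 5 := by
      intro j
      have := heq j i
      rw [hc, hc] at this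
      omega
    have hle : ∑ j, c j ≤ 5 * (12 * m + 10) := by
      calc ∑ j, c j ≤ ∑ _j : Fin (12 * m + 10), 5 := Finset.sum_le_sum fun j _ => hall j
        _ = 5 * (12 * m + 10) := by simp [mul_comm]
    omega
  have hne : ∀ i : Fin (12 * m + 10), ∃ v, f v = i := by
    intro i
    by_contra h
    push_neg at h
    have hz : c i = 0 := by
      rw [hcdef]
      simp only [Finset.card_eq_zero, Finset.filter_eq_empty_iff]
      exact fun v _ => h v
    have := hmin i
    omega
  set p : Fin (12 * m + 10) → Fin 3 := fun i => (Classical.choose (hne i)).1 with hp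
  have hvp : ∀ v, v.1 = p (f v) := by
    intro v
    apply onePart _ {w | f w = f v} _ (hac (f v)) (hdeg (f v)) v rfl
        (Classical.choose (hne (f v))) (Classical.choose_spec (hne (f v)))
    rw [hc]
    exact hmin _
  set T : Finset (Fin (12 * m + 10)) := Finset.univ.filter fun i => p i = 0 with hT
  have hpart : (4 * (5 * m + 4) + 1 : ℕ) = ∑ i ∈ T, c i := by
    have h1 : (Finset.univ.filter fun v : (Σ _ : Fin 3, Fin (4 * (5 * m + 4) + 1)) => v.1 = 0)
        = Finset.univ.filter fun v => p (f v) = 0 := by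
      ext v
      simp [hvp v]
    have h2 := Finset.card_eq_sum_card_fiberwise
      (f := f) (s := Finset.univ.filter fun v : (Σ _ : Fin 3, Fin (4 * (5 * m + 4) + 1)) => p (f v) = 0)
      (t := T) (by
        intro v hv
        rw [Finset.mem_coe, Finset.mem_filter] at hv
        rw [Finset.mem_coe, hT, Finset.mem_filter]
        exact ⟨Finset.mem_univ _, hv.2⟩)
    rw [← part_card (4 * (5 * m + 4) + 1) 0, h1, h2]
    apply Finset.sum_congr rfl
    intro i hi
    rw [hT, Finset.mem_filter] at hi
    rw [hcdef]
    congr 1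
    ext v
    simp only [Finset.mem_filter, Finset.mem_univ, true_and]
    constructor
    · rintro ⟨_, h⟩; exact h
    · rintro rfl; exact ⟨hi.2, rfl⟩
  have hdec : ∀ s : Finset (Fin (12 * m + 10)),
      ∑ i ∈ s, c i = 5 * s.card + ∑ i ∈ s, (c i - 5) := by
    intro s
    have h5 : ∑ i ∈ s, c i = ∑ i ∈ s, (5 + (c i - 5)) :=
      Finset.sum_congr rfl fun i _ => by have := hmin i; omega
    rw [h5, Finset.sum_add_distrib, Finset.sum_const, smul_eq_mul, mul_comm]
  have hr1 : ∑ i : Fin (12 * m + 10), (c i - 5) = 1 := by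
    have h1 := hdec Finset.univ
    rw [hsum, Finset.card_univ, Fintype.card_fin] at h1
    omega
  have hrT : ∑ i ∈ T, (c i - 5) ≤ 1 := by
    rw [← hr1]
    exact Finset.sum_le_sum_of_subset (Finset.subset_univ T)
  have hfin := hpart
  rw [hdec T] at hfin
  omega

lemma colorable_large {V : Type} [Fintype V] (G : SimpleGraph V) (t : ℕ)
    (h : Fintype.card V ≤ t) : EqTreeColorable G t 3 := by
  obtain ⟨e⟩ := Function.Embedding.nonempty_of_card_le (β := Fin t)
    (by simpa using h)
  refine ⟨e, ?_, ?_, ?_⟩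
  · intro i j
    have h1 : ({v | e v = i} : Set V).ncard ≤ 1 :=
      (Set.ncard_le_one (Set.toFinite _)).mpr
        (fun a ha b hb => e.injective (ha.trans hb.symm))
    omega
  · intro i v c hc
    cases c with
    | nil => simp at hc
    | cons hadj p =>
      rename_i u
      have : v = u := Subtype.ext (e.injective ((v.2 : e _ = i).trans (u.2 : e _ = i).symm))
      exact (G.induce _).loopless.irrefl _ (this ▸ hadj)
  · intro i v
    have : (G.induce {v | e v = i}).neighborSet v = ∅ := by
      ext w
      simp only [mem_neighborSet, Set.mem_empty_iff_false, iff_false]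
      intro hadj
      exact hadj.ne (Subtype.ext (e.injective ((v.2 : e _ = i).trans (w.2 : e _ = i).symm)))
    rw [this, Set.ncard_empty]
    omega


theorem stmt14 (k m : ℕ) (hk : k = 5 * m + 4) :
    ¬ EqTreeColorable (K3 (4 * k + 1)) (12 * m + 10) 3 ∧
    (12 * k + 7) / 5 ≤ vaStrong (K3 (4 * k + 1)) 3 := by
  subst hk
  refine ⟨not_colorable m, ?_⟩
  have hcard : Fintype.card (Σ _ : Fin 3, Fin (4 * (5 * m + 4) + 1))
      = 3 * (4 * (5 * m + 4) + 1) := by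
    simp [Fintype.card_sigma]
  have hmem : (3 * (4 * (5 * m + 4) + 1)) ∈
      {t | ∀ t', t ≤ t' → EqTreeColorable (K3 (4 * (5 * m + 4) + 1)) t' 3} :=
    fun t' ht' => colorable_large _ t' (by rw [hcard]; omega)
  have hInf := Nat.sInf_mem (⟨_, hmem⟩ :
    Set.Nonempty {t | ∀ t', t ≤ t' → EqTreeColorable (K3 (4 * (5 * m + 4) + 1)) t' 3})
  rw [vaStrong]
  by_contra hlt
  push_neg at hlt
  have hd : (12 * (5 * m + 4) + 7) / 5 = 12 * m + 11 := by omega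
  rw [hd] at hlt
  exact not_colorable m (hInf (12 * m + 10) (by omega))
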